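/- Let Q : ℤ × {0,1} → ℝ≥0 be finitely supported with symmetry Q(t,0) = Q(-t,1) and each marginal summing to 1/2. Define the minus transform Q⁻(t,u) = Σ over (t_a,t_b,v) with f̃(t_a,t_b) = t of Q(t_a; u ⊕ v)·Q(t_b; v). Then for all ξ₀ with 0 < ξ₀ ≤ 1, Σ_t Q⁻(t,0)·ξ₀^t ≤ 2·Σ_t Q(t,0)·ξ₀^t. -/
import Mathlib

lemma sign_min_ge (a b : ℤ) : min a b ≤ a.sign * b.sign * min |a| |b| := by
  rcases lt_trichotomy a 0 with ha | rfl | ha <;> rcases lt_trichotomy b 0 with hb | rfl | hb <;>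
    simp_all [Int.sign_eq_one_of_pos, Int.sign_eq_neg_one_of_neg, abs_of_pos, abs_of_neg] <;>
    omega

lemma ftilde_neg (a b : ℤ) :
    Int.sign (-a) * Int.sign (-b) * min |(-a)| |(-b)| = a.sign * b.sign * min |a| |b| := by
  simp [Int.sign_neg, abs_neg]

lemma key_bound {ξ₀ : ℝ} (h0 : 0 < ξ₀) (h1 : ξ₀ ≤ 1) (a b : ℤ) :
    ξ₀ ^ (a.sign * b.sign * min |a| |b|) ≤ ξ₀ ^ a + ξ₀ ^ b := by
  have h := zpow_le_zpow_right_of_le_one₀ h0 h1 (sign_min_ge a b)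
  rcases min_cases a b with ⟨he, _⟩ | ⟨he, _⟩ <;> rw [he] at h
  · exact h.trans (le_add_of_nonneg_right (zpow_pos h0 b).le)
  · exact h.trans (le_add_of_nonneg_left (zpow_pos h0 a).le)

lemma key_bound' {ξ₀ : ℝ} (h0 : 0 < ξ₀) (h1 : ξ₀ ≤ 1) (a b : ℤ) :
    ξ₀ ^ (a.sign * b.sign * min |a| |b|) ≤ ξ₀ ^ (-a) + ξ₀ ^ (-b) := by
  have := key_bound h0 h1 (-a) (-b)
  rwa [ftilde_neg] at this

/-- The minus transform of the joint distribution `Q`: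
`Q⁻(t;u) = Σ_{t_a,t_b,v : f̃(t_a,t_b) = t} Q(t_a; u⊕v)·Q(t_b; v)`,
where `f̃(a,b) = sign(a)·sign(b)·min{|a|,|b|}` and bits are encoded as `Bool`. -/
noncomputable def minusT (Q : ℤ → Bool → ℝ) (t : ℤ) (u : Bool) : ℝ :=
  ∑' p : ℤ × ℤ × Bool,
    if Int.sign p.1 * Int.sign p.2.1 * min |p.1| |p.2.1| = t then
      Q p.1 (xor u p.2.2) * Q p.2.1 p.2.2 else 0

/-- Posynomial bound for the minus transform:
`Σ_t Q⁻(t,0)·ξ₀^t ≤ 2·Σ_t Q(t,0)·ξ₀^t` for `0 < ξ₀ ≤ 1`. -/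
theorem minus_posynomial_bound (Q : ℤ → Bool → ℝ)
    (hnn : ∀ t u, 0 ≤ Q t u)
    (hfin : (Function.support fun p : ℤ × Bool => Q p.1 p.2).Finite)
    (hsym : ∀ t : ℤ, Q t false = Q (-t) true)
    (hmarg : ∀ u : Bool, ∑' t : ℤ, Q t u = 1 / 2)
    (ξ₀ : ℝ) (h0 : 0 < ξ₀) (h1 : ξ₀ ≤ 1) :
    ∑' t : ℤ, minusT Q t false * ξ₀ ^ t
      ≤ 2 * ∑' t : ℤ, Q t false * ξ₀ ^ t := by
  classical
  set F := hfin.toFinset with hF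
  set s0 : Finset ℤ := F.image Prod.fst with hs0def
  set s : Finset ℤ := s0 ∪ s0.image (fun x => -x) with hsdef
  have hsmem : ∀ t u, Q t u ≠ 0 → t ∈ s := by
    intro t u h
    have hm : (t, u) ∈ F := hfin.mem_toFinset.2 h
    exact Finset.mem_union_left _ (Finset.mem_image.2 ⟨(t, u), hm, rfl⟩)
  have hs0' : ∀ t u, t ∉ s → Q t u = 0 := by
    intro t u ht
    by_contra h
    exact ht (hsmem t u h)
  have hsneg : ∀ t ∈ s, -t ∈ s := by
    intro t ht
    rcases Finset.mem_union.1 ht with h | h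
    · exact Finset.mem_union_right _ (Finset.mem_image.2 ⟨t, h, rfl⟩)
    · rcases Finset.mem_image.1 h with ⟨x, hx, rfl⟩
      simp only [neg_neg]
      exact Finset.mem_union_left _ hx
  have himg : s.image (fun x : ℤ => -x) = s := by
    apply Finset.ext
    intro x
    simp only [Finset.mem_image]
    constructor
    · rintro ⟨y, hy, rfl⟩; exact hsneg y hy
    · intro hx; exact ⟨-x, hsneg x hx, neg_neg x⟩
  have hmargs : ∀ u, ∑ t ∈ s, Q t u = 1 / 2 := by
    intro u
    rw [← hmarg u]
    exact (tsum_eq_sum fun t ht => hs0' t u ht).symm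
  have hRHS : ∑' t : ℤ, Q t false * ξ₀ ^ t = ∑ t ∈ s, Q t false * ξ₀ ^ t := by
    apply tsum_eq_sum
    intro t ht
    rw [hs0' t false ht, zero_mul]
  set f : ℤ × ℤ × Bool → ℤ := fun p => Int.sign p.1 * Int.sign p.2.1 * min |p.1| |p.2.1|
    with hfdef
  set P : Finset (ℤ × ℤ × Bool) := s ×ˢ s ×ˢ Finset.univ with hPdef
  have hminus : ∀ t, minusT Q t false
      = ∑ p ∈ P, if f p = t then Q p.1 p.2.2 * Q p.2.1 p.2.2 else 0 := by
    intro t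
    rw [minusT]
    simp only [Bool.false_xor]
    apply tsum_eq_sum
    intro p hp
    have hz : Q p.1 p.2.2 * Q p.2.1 p.2.2 = 0 := by
      simp only [hPdef, Finset.mem_product, Finset.mem_univ, and_true] at hp
      by_cases h1' : p.1 ∈ s
      · have h2 : p.2.1 ∉ s := fun h => hp ⟨h1', h⟩
        rw [hs0' _ _ h2, mul_zero]
      · rw [hs0' _ _ h1', zero_mul]
    simp [hz]
  set T : Finset ℤ := P.image f with hTdef
  have hLHS : ∑' t : ℤ, minusT Q t false * ξ₀ ^ t = ∑ t ∈ T, minusT Q t false * ξ₀ ^ t := by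
    apply tsum_eq_sum
    intro t ht
    have hz : minusT Q t false = 0 := by
      rw [hminus t]
      apply Finset.sum_eq_zero
      intro p hp
      rw [if_neg]
      intro he
      exact ht (Finset.mem_image.2 ⟨p, hp, he⟩)
    rw [hz, zero_mul]
  set g : Bool → ℤ → ℤ := fun v a => cond v (-a) a with hgdef
  set A : Bool → ℝ := fun v => ∑ a ∈ s, Q a v * ξ₀ ^ (g v a) with hAdef
  have step1 : ∑ t ∈ T, minusT Q t false * ξ₀ ^ t
      = ∑ p ∈ P, (Q p.1 p.2.2 * Q p.2.1 p.2.2) * ξ₀ ^ (f p) := by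
    simp_rw [hminus, Finset.sum_mul, ite_mul, zero_mul]
    rw [Finset.sum_comm]
    refine Finset.sum_congr rfl fun p hp => ?_
    rw [Finset.sum_ite_eq T (f p) (fun t => Q p.1 p.2.2 * Q p.2.1 p.2.2 * ξ₀ ^ t)]
    rw [if_pos (Finset.mem_image.2 ⟨p, hp, rfl⟩)]
  have step2 : ∑ p ∈ P, (Q p.1 p.2.2 * Q p.2.1 p.2.2) * ξ₀ ^ (f p)
      ≤ ∑ p ∈ P, (Q p.1 p.2.2 * Q p.2.1 p.2.2)
          * (ξ₀ ^ (g p.2.2 p.1) + ξ₀ ^ (g p.2.2 p.2.1)) := by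
    apply Finset.sum_le_sum
    rintro ⟨a, b, v⟩ _
    apply mul_le_mul_of_nonneg_left _ (mul_nonneg (hnn _ _) (hnn _ _))
    cases v
    · exact key_bound h0 h1 a b
    · exact key_bound' h0 h1 a b
  have hPsum : ∀ h : ℤ × ℤ × Bool → ℝ,
      ∑ p ∈ P, h p = ∑ v : Bool, ∑ a ∈ s, ∑ b ∈ s, h (a, b, v) := by
    intro h
    rw [hPdef, Finset.sum_product]
    simp_rw [Finset.sum_product]
    rw [show (∑ a ∈ s, ∑ b ∈ s, ∑ v : Bool, h (a, b, v))
        = ∑ a ∈ s, ∑ v : Bool, ∑ b ∈ s, h (a, b, v) from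
      Finset.sum_congr rfl fun a _ => Finset.sum_comm]
    exact Finset.sum_comm
  have hv : ∀ v : Bool,
      ∑ a ∈ s, ∑ b ∈ s, (Q a v * Q b v) * (ξ₀ ^ (g v a) + ξ₀ ^ (g v b)) = A v := by
    intro v
    calc ∑ a ∈ s, ∑ b ∈ s, (Q a v * Q b v) * (ξ₀ ^ (g v a) + ξ₀ ^ (g v b))
        = ∑ a ∈ s, ((Q a v * ξ₀ ^ (g v a)) * ∑ b ∈ s, Q b v
            + Q a v * ∑ b ∈ s, Q b v * ξ₀ ^ (g v b)) := by
          refine Finset.sum_congr rfl fun a _ => ?_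
          rw [Finset.mul_sum, Finset.mul_sum, ← Finset.sum_add_distrib]
          exact Finset.sum_congr rfl fun b _ => by ring
      _ = ∑ a ∈ s, ((Q a v * ξ₀ ^ (g v a)) * (1 / 2) + Q a v * A v) := by rw [hmargs v]
      _ = (∑ a ∈ s, Q a v * ξ₀ ^ (g v a)) * (1 / 2) + (∑ a ∈ s, Q a v) * A v := by
          rw [Finset.sum_add_distrib, ← Finset.sum_mul, ← Finset.sum_mul]
      _ = A v * (1 / 2) + (1 / 2) * A v := by rw [hmargs v]
      _ = A v := by ring
  have hAt : A true = A false := by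
    have h1' : A true = ∑ a ∈ s, Q (-a) false * ξ₀ ^ (-a) := by
      refine Finset.sum_congr rfl fun a _ => ?_
      rw [show Q a true = Q (-a) false from by rw [hsym (-a), neg_neg]]
      rfl
    have h2' : ∑ a ∈ s, Q (-a) false * ξ₀ ^ (-a)
        = ∑ a ∈ s.image (fun x : ℤ => -x), Q a false * ξ₀ ^ a := by
      rw [Finset.sum_image (fun x _ y _ h => neg_injective h)]
    rw [h1', h2', himg]
    rfl
  have step3 : ∑ p ∈ P, (Q p.1 p.2.2 * Q p.2.1 p.2.2)
      * (ξ₀ ^ (g p.2.2 p.1) + ξ₀ ^ (g p.2.2 p.2.1))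
      = 2 * ∑ t ∈ s, Q t false * ξ₀ ^ t := by
    rw [hPsum]
    simp only []
    rw [Fintype.sum_bool]
    rw [hv true, hv false, hAt]
    have : A false = ∑ t ∈ s, Q t false * ξ₀ ^ t := rfl
    rw [this]; ring
  rw [hLHS, hRHS]
  calc ∑ t ∈ T, minusT Q t false * ξ₀ ^ t
      = ∑ p ∈ P, (Q p.1 p.2.2 * Q p.2.1 p.2.2) * ξ₀ ^ (f p) := step1
    _ ≤ ∑ p ∈ P, (Q p.1 p.2.2 * Q p.2.1 p.2.2)
          * (ξ₀ ^ (g p.2.2 p.1) + ξ₀ ^ (g p.2.2 p.2.1)) := step2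
    _ = 2 * ∑ t ∈ s, Q t false * ξ₀ ^ t := step3
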